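/- Let φ : [Δ]^d → Z^d be the randomly shifted grid hash defined by φ(x) = ⌊(x+v)/(r/√d)⌋ coordinatewise, for a fixed shift vector v ∈ [0, r/√d]^d. Then for every x ∈ [Δ]^d and radius r ≥ 0, the set of occupied hash values φ(ball(x,r)) = {z ∈ Z^d : dist(x, φ^{-1}(z)) ≤ r} induces a connected subgraph of the grid graph on Z^d in which two vertices z, z' are adjacent iff ‖z − z'‖₁ = 1 and they differ in exactly one coordinate. -/

import Mathlib

open Finset

/-- The grid graph on `ℤ^d`: two integer vectors are adjacent iff their
`ℓ₁`-distance is `1`, i.e. they differ in exactly one coordinate, by `1`. -/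
def gridGraph (d : ℕ) : SimpleGraph (Fin d → ℤ) where
  Adj z z' := ∑ i, |z i - z' i| = 1
  symm := by
    constructor
    intro z z' h
    show ∑ i, |z' i - z i| = 1
    have hsum : (∑ i, |z' i - z i|) = ∑ i, |z i - z' i| :=
      Finset.sum_congr rfl fun i _ => abs_sub_comm _ _
    rw [hsum]; exact h
  loopless := by
    constructor
    intro z h
    simp at h

/-- The randomly shifted grid hash `φ(x) = ⌊(x + v)/(r/√d)⌋` (coordinatewise). -/
noncomputable def gridHash (d : ℕ) (r : ℝ) (v : Fin d → ℝ)
    (y : EuclideanSpace ℝ (Fin d)) : Fin d → ℤ :=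
  fun i => ⌊(y i + v i) / (r / Real.sqrt d)⌋

/-- Helper: if every point of `S` has a point of `T` at least as close to `x`,
then `infDist x T ≤ infDist x S`. -/
lemma infDist_le_infDist_aux {E : Type*} [MetricSpace E] {x : E} {S T : Set E}
    (hS : S.Nonempty) (h : ∀ y ∈ S, ∃ y' ∈ T, dist x y' ≤ dist x y) :
    Metric.infDist x T ≤ Metric.infDist x S := by
  by_contra h'
  push_neg at h'
  obtain ⟨y, hyS, hy⟩ := (Metric.infDist_lt_iff hS).1 h'
  obtain ⟨y', hy'T, hy'⟩ := h y hyS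
  exact absurd (Metric.infDist_le_dist_of_mem hy'T) (not_le.2 (lt_of_le_of_lt hy' hy))

/-- Updating one coordinate to something at least as close does not increase distance. -/
lemma dist_update_le {d : ℕ} (x y : EuclideanSpace ℝ (Fin d)) (i : Fin d) (a : ℝ)
    (h : |x i - a| ≤ |x i - y i|) :
    dist x (WithLp.toLp 2 (Function.update y i a) : EuclideanSpace ℝ (Fin d)) ≤ dist x y := by
  rw [EuclideanSpace.dist_eq, EuclideanSpace.dist_eq]
  apply Real.sqrt_le_sqrt
  apply Finset.sum_le_sum
  intro j _
  by_cases hj : j = i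
  · subst hj
    have : (WithLp.toLp 2 (Function.update y j a) : EuclideanSpace ℝ (Fin d)) j = a := by
      simp [Function.update]
    rw [this, Real.dist_eq, Real.dist_eq]
    exact pow_le_pow_left₀ (abs_nonneg _) h 2
  · have : (WithLp.toLp 2 (Function.update y i a) : EuclideanSpace ℝ (Fin d)) j = y j := by
      simp [Function.update, hj]
    rw [this]

theorem gridHash_ball_connected (d Δ : ℕ) (hd : 1 ≤ d) (r : ℝ) (hr : 0 < r)
    (v : Fin d → ℝ) (hv : ∀ i, v i ∈ Set.Icc (0 : ℝ) (r / Real.sqrt d))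
    (x : EuclideanSpace ℝ (Fin d))
    (hx : ∀ i, ∃ m : ℤ, 1 ≤ m ∧ m ≤ (Δ : ℤ) ∧ x i = (m : ℝ)) :
    ((gridGraph d).induce
      {z : Fin d → ℤ | Metric.infDist x (gridHash d r v ⁻¹' {z}) ≤ r}).Connected := by
  classical
  set w : ℝ := r / Real.sqrt d with hw_def
  have hd0 : (0 : ℝ) < Real.sqrt d := by
    apply Real.sqrt_pos.2
    exact_mod_cast Nat.lt_of_lt_of_le Nat.zero_lt_one hd
  have hw : 0 < w := div_pos hr hd0
  -- membership in a bucket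
  have hmem : ∀ (y : EuclideanSpace ℝ (Fin d)) (z : Fin d → ℤ),
      gridHash d r v y = z ↔ ∀ i, (z i : ℝ) * w ≤ y i + v i ∧ y i + v i < ((z i : ℝ) + 1) * w := by
    intro y z
    rw [funext_iff]
    apply forall_congr'
    intro i
    rw [gridHash]
    rw [Int.floor_eq_iff]
    constructor
    · rintro ⟨h1, h2⟩
      constructor
      · calc (z i : ℝ) * w ≤ ((y i + v i) / w) * w := by
              apply mul_le_mul_of_nonneg_right h1 hw.le
          _ = y i + v i := div_mul_cancel₀ _ hw.ne'
      · calc y i + v i = ((y i + v i) / w) * w := (div_mul_cancel₀ _ hw.ne').symm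
          _ < ((z i : ℝ) + 1) * w := by
              apply mul_lt_mul_of_pos_right h2 hw
    · rintro ⟨h1, h2⟩
      constructor
      · exact (le_div_iff₀ hw).2 h1
      · exact (div_lt_iff₀ hw).2 h2
  -- every bucket is nonempty
  have hne : ∀ z : Fin d → ℤ, (gridHash d r v ⁻¹' {z}).Nonempty := by
    intro z
    refine ⟨WithLp.toLp 2 (fun i => (z i : ℝ) * w + w / 2 - v i : Fin d → ℝ), ?_⟩
    simp only [Set.mem_preimage, Set.mem_singleton_iff]
    rw [hmem]
    intro i
    constructor <;> simp only [PiLp.toLp_apply] <;> nlinarith [hw]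
  set z0 : Fin d → ℤ := gridHash d r v x with hz0_def
  set S : Set (Fin d → ℤ) := {z : Fin d → ℤ | Metric.infDist x (gridHash d r v ⁻¹' {z}) ≤ r}
    with hS_def
  have hz0S : z0 ∈ S := by
    have : x ∈ gridHash d r v ⁻¹' {z0} := rfl
    have h0 : Metric.infDist x (gridHash d r v ⁻¹' {z0}) = 0 :=
      Metric.infDist_zero_of_mem this
    simp only [hS_def, Set.mem_setOf_eq, h0]
    exact hr.le
  -- one step toward z0
  have hstep : ∀ (z : Fin d → ℤ) (i : Fin d), z i ≠ z0 i →
      ∃ z' : Fin d → ℤ, (gridGraph d).Adj z z' ∧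
        Metric.infDist x (gridHash d r v ⁻¹' {z'}) ≤ Metric.infDist x (gridHash d r v ⁻¹' {z}) ∧
        (∑ j, |z' j - z0 j|) = (∑ j, |z j - z0 j|) - 1 := by
    intro z i hi
    rcases lt_or_gt_of_ne hi with hlt | hgt
    · -- z i < z0 i : move up, new coord z i + 1, and y'_i := (z i + 1) * w - v i
      refine ⟨Function.update z i (z i + 1), ?_, ?_, ?_⟩
      · show (∑ j, |z j - Function.update z i (z i + 1) j|) = 1
        rw [Finset.sum_eq_single i]
        · simp
        · intro j _ hj; simp [Function.update, hj]
        · intro h; exact absurd (Finset.mem_univ i) h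
      · apply infDist_le_infDist_aux (hne z)
        intro y hy
        simp only [Set.mem_preimage, Set.mem_singleton_iff] at hy
        rw [hmem] at hy
        set a : ℝ := ((z i : ℝ) + 1) * w - v i with ha_def
        have hxa : a ≤ x i := by
          have : ((z i : ℝ) + 1) ≤ (x i + v i) / w := by
            have : z i + 1 ≤ ⌊(x i + v i) / w⌋ := hlt
            have := Int.le_floor.1 this
            push_cast at this ⊢
            linarith
          have := (le_div_iff₀ hw).1 this
          linarith
        have hya : y i < a := by
          have := (hy i).2
          linarith
        refine ⟨(WithLp.toLp 2 (Function.update y i a) : EuclideanSpace ℝ (Fin d)), ?_, ?_⟩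
        · simp only [Set.mem_preimage, Set.mem_singleton_iff]
          rw [hmem]
          intro j
          by_cases hj : j = i
          · subst hj
            have h1 : (WithLp.toLp 2 (Function.update y j a) : EuclideanSpace ℝ (Fin d)) j = a := by
              simp [Function.update]
            have h2 : Function.update z j (z j + 1) j = z j + 1 := by
              simp [Function.update]
            rw [h1, h2]
            push_cast
            constructor
            · linarith
            · nlinarith
          · have h1 : (WithLp.toLp 2 (Function.update y i a) : EuclideanSpace ℝ (Fin d)) j = y j := by
              simp [Function.update, hj]
            have h2 : Function.update z i (z i + 1) j = z j := by
              simp [Function.update, hj]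
            rw [h1, h2]
            exact hy j
        · apply dist_update_le
          rw [abs_of_nonneg (by linarith), abs_of_nonneg (by linarith)]
          linarith
      · rw [Finset.sum_eq_sum_sdiff_singleton_add (Finset.mem_univ i),
            Finset.sum_eq_sum_sdiff_singleton_add (Finset.mem_univ i)
              (fun j => |z j - z0 j|)]
        have heq : ∑ j ∈ Finset.univ \ {i}, |Function.update z i (z i + 1) j - z0 j|
            = ∑ j ∈ Finset.univ \ {i}, |z j - z0 j| := by
          apply Finset.sum_congr rfl
          intro j hj
          have hj' : j ≠ i := by simpa using (Finset.mem_sdiff.1 hj).2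
          simp [Function.update, hj']
        rw [heq]
        have h1 : Function.update z i (z i + 1) i = z i + 1 := by simp [Function.update]
        rw [h1]
        have h2 : |z i + 1 - z0 i| = |z i - z0 i| - 1 := by
          rw [abs_of_nonpos (by omega), abs_of_nonpos (by omega)]
          ring
        rw [h2]; ring
    · -- z0 i < z i : move down, y'_i := max (x i) ((z i - 1) * w - v i)
      refine ⟨Function.update z i (z i - 1), ?_, ?_, ?_⟩
      · show (∑ j, |z j - Function.update z i (z i - 1) j|) = 1
        rw [Finset.sum_eq_single i]
        · simp
        · intro j _ hj; simp [Function.update, hj]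
        · intro h; exact absurd (Finset.mem_univ i) h
      · apply infDist_le_infDist_aux (hne z)
        intro y hy
        simp only [Set.mem_preimage, Set.mem_singleton_iff] at hy
        rw [hmem] at hy
        set a : ℝ := max (x i) (((z i : ℝ) - 1) * w - v i) with ha_def
        have hxz : x i + v i < (z i : ℝ) * w := by
          have : ⌊(x i + v i) / w⌋ < z i := hgt
          have := Int.floor_lt.1 this
          have := (div_lt_iff₀ hw).1 this
          linarith
        have hxa : x i ≤ a := le_max_left _ _
        have haup : a < (z i : ℝ) * w - v i := by
          apply max_lt
          · linarith
          · nlinarith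
        have hay : a ≤ y i := by
          have := (hy i).1
          linarith
        refine ⟨(WithLp.toLp 2 (Function.update y i a) : EuclideanSpace ℝ (Fin d)), ?_, ?_⟩
        · simp only [Set.mem_preimage, Set.mem_singleton_iff]
          rw [hmem]
          intro j
          by_cases hj : j = i
          · subst hj
            have h1 : (WithLp.toLp 2 (Function.update y j a) : EuclideanSpace ℝ (Fin d)) j = a := by
              simp [Function.update]
            have h2 : Function.update z j (z j - 1) j = z j - 1 := by
              simp [Function.update]
            rw [h1, h2]
            push_cast
            constructor
            · have h3 : ((z j : ℝ) - 1) * w - v j ≤ a := le_max_right _ _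
              linarith
            · linarith
          · have h1 : (WithLp.toLp 2 (Function.update y i a) : EuclideanSpace ℝ (Fin d)) j = y j := by
              simp [Function.update, hj]
            have h2 : Function.update z i (z i - 1) j = z j := by
              simp [Function.update, hj]
            rw [h1, h2]
            exact hy j
        · apply dist_update_le
          have hxy : x i ≤ y i := le_trans hxa hay
          rw [abs_of_nonpos (by linarith), abs_of_nonpos (by linarith)]
          linarith
      · rw [Finset.sum_eq_sum_sdiff_singleton_add (Finset.mem_univ i),
            Finset.sum_eq_sum_sdiff_singleton_add (Finset.mem_univ i)
              (fun j => |z j - z0 j|)]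
        have heq : ∑ j ∈ Finset.univ \ {i}, |Function.update z i (z i - 1) j - z0 j|
            = ∑ j ∈ Finset.univ \ {i}, |z j - z0 j| := by
          apply Finset.sum_congr rfl
          intro j hj
          have hj' : j ≠ i := by simpa using (Finset.mem_sdiff.1 hj).2
          simp [Function.update, hj']
        rw [heq]
        have h1 : Function.update z i (z i - 1) i = z i - 1 := by simp [Function.update]
        rw [h1]
        have h2 : |z i - 1 - z0 i| = |z i - z0 i| - 1 := by
          rw [abs_of_nonneg (by omega), abs_of_nonneg (by omega)]
          ring
        rw [h2]; ring
  -- reachability to z0 by strong induction on the ℓ¹ distance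
  have hreach : ∀ (n : ℕ) (z : Fin d → ℤ) (hz : z ∈ S),
      (∑ j, |z j - z0 j|).toNat = n →
      ((gridGraph d).induce S).Reachable ⟨z, hz⟩ ⟨z0, hz0S⟩ := by
    intro n
    induction n using Nat.strong_induction_on with
    | _ n ih =>
      intro z hz hn
      by_cases hzz : z = z0
      · subst hzz; rfl
      · have hex : ∃ i, z i ≠ z0 i := by
          by_contra h
          push_neg at h
          exact hzz (funext h)
        obtain ⟨i, hi⟩ := hex
        obtain ⟨z', hadj, hle, hsum⟩ := hstep z i hi
        have hz' : z' ∈ S := le_trans hle hz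
        have hsum_pos : 1 ≤ ∑ j, |z j - z0 j| := by
          calc (1 : ℤ) ≤ |z i - z0 i| := Int.one_le_abs (sub_ne_zero.2 hi)
            _ ≤ ∑ j, |z j - z0 j| := by
                apply Finset.single_le_sum (fun j _ => abs_nonneg _) (Finset.mem_univ i)
        have hn' : (∑ j, |z' j - z0 j|).toNat < n := by
          rw [← hn, hsum]
          exact (Int.toNat_lt_toNat (by linarith)).2 (by linarith)
        have hadj' : ((gridGraph d).induce S).Adj ⟨z, hz⟩ ⟨z', hz'⟩ := hadj
        exact hadj'.reachable.trans (ih _ hn' z' hz' rfl)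
  rw [SimpleGraph.connected_iff]
  refine ⟨?_, ⟨⟨z0, hz0S⟩⟩⟩
  rintro ⟨z, hz⟩ ⟨z', hz'⟩
  exact (hreach _ z hz rfl).trans (hreach _ z' hz' rfl).symm
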